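/- Under the hypotheses of the local theorem, if σ is a k'-automorphism of k'(α_1, …, α_m) with σ(α_i) = α_{π(i)} for a permutation π of {1, …, m}, then σ applied coefficientwise to λ_i(X) yields λ_{π(i)}(X). -/
import Mathlib

open Polynomial Finset

open Classical in
noncomputable def pmeas {K : Type*} [Field K] (p : Polynomial K) : ℕ :=
  if p = 0 then 0 else p.natDegree + 1

lemma pmeas_eq_zero {K : Type*} [Field K] {p : Polynomial K} (h : pmeas p = 0) : p = 0 := by
  by_contra hp; simp [pmeas, hp] at h

lemma exp_poly_unique {K : Type*} [Field K] [CharZero K] {m : ℕ} (α : Fin m → K)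
    (hα0 : ∀ i, α i ≠ 0) (hαinj : Function.Injective α) (n₀ : ℕ) :
    ∀ (N : ℕ) (p : Fin m → Polynomial K), (∑ i, pmeas (p i)) ≤ N →
      (∀ n : ℕ, n₀ ≤ n → ∑ i, (p i).eval (n : K) * α i ^ n = 0) → ∀ i, p i = 0 := by
  intro N
  induction N with
  | zero =>
    intro p hle _ i
    refine pmeas_eq_zero ?_
    have := (Finset.sum_eq_zero_iff (s := univ) (f := fun i => pmeas (p i))).mp
      (Nat.le_zero.mp hle) i (mem_univ i)
    exact this
  | succ N ih =>
    intro p hle hsum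
    by_cases hall : ∀ i, p i = 0
    · exact hall
    push_neg at hall
    obtain ⟨i0, hi0⟩ := hall
    set q : Fin m → Polynomial K :=
      fun i => C (α i) * ((p i).comp (X + C 1)) - C (α i0) * p i with hq
    have hqsum : ∀ n : ℕ, n₀ ≤ n → ∑ i, (q i).eval (n : K) * α i ^ n = 0 := by
      intro n hn
      have h1 : ∑ i, (p i).eval ((n+1 : ℕ) : K) * α i ^ (n+1) = 0 :=
        hsum (n+1) (le_trans hn (Nat.le_succ n))
      have h2 : ∑ i, (p i).eval (n : K) * α i ^ n = 0 := hsum n hn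
      have heq : ∑ i, (q i).eval (n : K) * α i ^ n
          = ∑ i, (p i).eval ((n+1 : ℕ) : K) * α i ^ (n+1)
            - α i0 * ∑ i, (p i).eval (n : K) * α i ^ n := by
        rw [Finset.mul_sum, ← Finset.sum_sub_distrib]
        refine Finset.sum_congr rfl fun i _ => ?_
        simp only [hq, eval_sub, eval_mul, eval_C, eval_comp, eval_add, eval_X]
        push_cast
        ring
      rw [heq, h1, h2, mul_zero, sub_zero]
    have hcomp_coeff : ∀ i, ((p i).comp (X + C 1)).coeff (p i).natDegree
        = (p i).coeff (p i).natDegree := by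
      intro i
      by_cases hpi : p i = 0
      · simp [hpi]
      by_cases hd : (p i).natDegree = 0
      · obtain ⟨c, hc⟩ := natDegree_eq_zero.mp hd
        rw [← hc]; simp
      have hnd : ((p i).comp (X + C 1)).natDegree = (p i).natDegree := by
        rw [natDegree_comp, natDegree_X_add_C, mul_one]
      have := leadingCoeff_comp (p := p i) (q := X + C 1) (by rw [natDegree_X_add_C]; norm_num)
      rw [leadingCoeff, leadingCoeff, hnd, (monic_X_add_C (1:K)).leadingCoeff, one_pow,
        mul_one] at this
      exact this
    have hqnd : ∀ i, (q i).natDegree ≤ (p i).natDegree := by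
      intro i
      refine le_trans (natDegree_sub_le _ _) ?_
      simp only [max_le_iff]
      refine ⟨le_trans natDegree_mul_le ?_, le_trans natDegree_mul_le ?_⟩
      · rw [natDegree_comp, natDegree_X_add_C, mul_one]; simp
      · simp
    have hqcoeff : ∀ i, (q i).coeff (p i).natDegree = (α i - α i0) * (p i).leadingCoeff := by
      intro i
      simp only [hq, coeff_sub, coeff_C_mul, hcomp_coeff i, leadingCoeff]
      ring
    have hqne : ∀ i, i ≠ i0 → p i ≠ 0 → (q i).coeff (p i).natDegree ≠ 0 := by
      intro i hne hpi
      rw [hqcoeff i]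
      exact mul_ne_zero (sub_ne_zero.mpr fun h => hne (hαinj h)) (leadingCoeff_ne_zero.mpr hpi)
    have hmeas : ∀ i, i ≠ i0 → pmeas (q i) ≤ pmeas (p i) := by
      intro i hne
      by_cases hpi : p i = 0
      · have : q i = 0 := by simp [hq, hpi]
        simp [pmeas, this]
      by_cases hqi : q i = 0
      · simp [pmeas, hqi]
      simp only [pmeas, if_neg hpi, if_neg hqi]
      exact Nat.succ_le_succ (hqnd i)
    have hmeas0 : pmeas (q i0) < pmeas (p i0) := by
      by_cases hqi : q i0 = 0
      · rw [pmeas, pmeas, if_pos hqi, if_neg hi0]; omega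
      have hcompne : (p i0).comp (X + C 1) ≠ 0 := fun h => by
        have := hcomp_coeff i0
        rw [h, coeff_zero] at this
        exact (leadingCoeff_ne_zero.mpr hi0) (by rw [leadingCoeff, ← this])
      have hnd : ((p i0).comp (X + C 1)).natDegree = (p i0).natDegree := by
        rw [natDegree_comp, natDegree_X_add_C, mul_one]
      have hdegeq : ((p i0).comp (X + C 1)).degree = (p i0).degree := by
        rw [degree_eq_natDegree hcompne, degree_eq_natDegree hi0, hnd]
      have hlceq : ((p i0).comp (X + C 1)).leadingCoeff = (p i0).leadingCoeff := by
        rw [leadingCoeff, hnd, hcomp_coeff i0, leadingCoeff]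
      have hdeg : (q i0).degree < (p i0).degree := by
        have hfac : q i0 = C (α i0) * ((p i0).comp (X + C 1) - p i0) := by
          rw [hq]; ring
        rw [hfac, degree_C_mul (hα0 i0)]
        have := degree_sub_lt hdegeq hcompne hlceq
        rwa [hdegeq] at this
      have hlt : (q i0).natDegree < (p i0).natDegree := by
        rw [degree_eq_natDegree hqi, degree_eq_natDegree hi0] at hdeg
        exact_mod_cast hdeg
      rw [pmeas, pmeas, if_neg hqi, if_neg hi0]
      omega
    have hsumlt : ∑ i, pmeas (q i) < ∑ i, pmeas (p i) := by
      refine Finset.sum_lt_sum (fun i _ => ?_) ⟨i0, mem_univ i0, hmeas0⟩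
      by_cases hne : i = i0
      · subst hne; exact le_of_lt hmeas0
      · exact hmeas i hne
    have hq0 : ∀ i, q i = 0 := ih q (by omega) hqsum
    have hp0 : ∀ i, i ≠ i0 → p i = 0 := by
      intro i hne
      by_contra hpi
      exact hqne i hne hpi (by rw [hq0 i, coeff_zero])
    have hsingle : ∀ n : ℕ, n₀ ≤ n → (p i0).eval (n : K) = 0 := by
      intro n hn
      have := hsum n hn
      rw [Finset.sum_eq_single i0 (fun i _ hne => by rw [hp0 i hne]; simp)
        (fun h => absurd (mem_univ i0) h)] at this
      exact (mul_eq_zero.mp this).resolve_right (pow_ne_zero n (hα0 i0))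
    exfalso
    apply hi0
    refine Polynomial.eq_zero_of_infinite_isRoot _ ?_
    have hinf : ((fun n : ℕ => (n : K)) '' Set.Ici n₀).Infinite :=
      Set.Infinite.image (fun a _ b _ h => Nat.cast_injective h) (Set.Ici_infinite n₀)
    refine hinf.mono ?_
    rintro x ⟨n, hn, rfl⟩
    exact hsingle n hn

theorem automorphism_permutes_lambdas
    (k' : Type*) [Field k'] (K : Type*) [Field K] [Algebra k' K] [CharZero K]
    (m : ℕ) (α : Fin m → K) (hα0 : ∀ i, α i ≠ 0) (hαinj : Function.Injective α)
    (lam : Fin m → Polynomial K) (hlam : ∀ i, lam i ≠ 0)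
    (n₀ : ℕ)
    (hS : ∀ n : ℕ, n₀ ≤ n →
      ∃ s : k', algebraMap k' K s = ∑ i, (lam i).eval (n : K) * α i ^ n)
    (hmem : ∀ i j, (lam i).coeff j ∈
      (IntermediateField.adjoin k' (Set.range α) : IntermediateField k' K))
    (σ : (IntermediateField.adjoin k' (Set.range α) : IntermediateField k' K) ≃ₐ[k']
         (IntermediateField.adjoin k' (Set.range α) : IntermediateField k' K))
    (π : Equiv.Perm (Fin m))
    (hσ : ∀ i, σ ⟨α i, IntermediateField.subset_adjoin k' (Set.range α) ⟨i, rfl⟩⟩ =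
      ⟨α (π i), IntermediateField.subset_adjoin k' (Set.range α) ⟨π i, rfl⟩⟩) :
    ∀ i j, (σ ⟨(lam i).coeff j, hmem i j⟩ : K) = (lam (π i)).coeff j := by
  -- lifted polynomials
  set lamL : Fin m → Polynomial (IntermediateField.adjoin k' (Set.range α) :
      IntermediateField k' K) :=
    fun i => ∑ k ∈ (lam i).support, Polynomial.C (⟨(lam i).coeff k, hmem i k⟩ :
      (IntermediateField.adjoin k' (Set.range α) : IntermediateField k' K))
      * Polynomial.X ^ k with hlamL
  have hcoeffL : ∀ i j, (lamL i).coeff j = ⟨(lam i).coeff j, hmem i j⟩ := by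
    intro i j
    simp only [hlamL, finset_sum_coeff, coeff_C_mul, coeff_X_pow, mul_ite, mul_one, mul_zero]
    rw [Finset.sum_ite_eq (lam i).support j]
    split_ifs with h
    · rfl
    · exact (Subtype.ext (by simpa using notMem_support_iff.mp h)).symm
  -- ring homs
  set v := ((IntermediateField.adjoin k' (Set.range α) : IntermediateField k' K).val).toRingHom
    with hv
  set φ := v.comp σ.toRingEquiv.toRingHom with hφ
  set P : Fin m → Polynomial K := fun i => (lamL i).map φ with hP
  have hPcoeff : ∀ i j, (P i).coeff j = (σ ⟨(lam i).coeff j, hmem i j⟩ : K) := by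
    intro i j
    rw [hP]
    simp only [coeff_map, hcoeffL]
    rfl
  have hmapval : ∀ i, (lamL i).map v = lam i := by
    intro i
    ext j
    rw [coeff_map, hcoeffL]
    rfl
  -- α as elements of L
  set a := fun i => (⟨α i, IntermediateField.subset_adjoin k' (Set.range α) ⟨i, rfl⟩⟩ :
    (IntermediateField.adjoin k' (Set.range α) : IntermediateField k' K)) with ha
  -- key sum identity
  have hkey : ∀ n : ℕ, n₀ ≤ n →
      ∑ i, (P i).eval (n : K) * α (π i) ^ n = ∑ i, (lam i).eval (n : K) * α i ^ n := by
    intro n hn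
    obtain ⟨s, hs⟩ := hS n hn
    set t := ∑ i, (lamL i).eval ((n : ℕ) : (IntermediateField.adjoin k' (Set.range α) :
      IntermediateField k' K)) * a i ^ n with ht
    have hvt : v t = ∑ i, (lam i).eval (n : K) * α i ^ n := by
      rw [ht, map_sum]
      refine Finset.sum_congr rfl fun i _ => ?_
      rw [map_mul, map_pow]
      have he : v ((lamL i).eval ((n : ℕ) : ↥(IntermediateField.adjoin k' (Set.range α))))
          = ((lamL i).map v).eval (v ((n : ℕ) : ↥(IntermediateField.adjoin k' (Set.range α)))) := by
        rw [eval_map, eval₂_at_apply]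
      rw [he, hmapval, map_natCast]
      rfl
    have htval : t = algebraMap k' _ s := by
      apply Subtype.ext
      show v t = v (algebraMap k' _ s)
      rw [hvt, ← hs]
      rfl
    have hσt : σ t = t := by rw [htval, AlgEquiv.commutes]
    have hvσt : v (σ t) = ∑ i, (P i).eval (n : K) * α (π i) ^ n := by
      rw [ht, map_sum, map_sum]
      refine Finset.sum_congr rfl fun i _ => ?_
      rw [map_mul, map_pow, map_mul, map_pow, hσ i]
      congr 1
      · have h2 : φ ((lamL i).eval ((n : ℕ) : ↥(IntermediateField.adjoin k' (Set.range α))))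
            = ((lamL i).map φ).eval (φ ((n : ℕ) : ↥(IntermediateField.adjoin k' (Set.range α)))) := by
          rw [eval_map, eval₂_at_apply]
        show φ _ = _
        rw [h2, map_natCast, hP]
    rw [← hvσt, hσt, hvt]
  -- apply uniqueness
  have hDzero : ∀ i, P (π.symm i) - lam i = 0 := by
    refine exp_poly_unique α hα0 hαinj n₀ (∑ i, pmeas (P (π.symm i) - lam i)) _ le_rfl ?_
    intro n hn
    have hre : ∑ i, (P (π.symm i)).eval (n : K) * α i ^ n
        = ∑ i, (P i).eval (n : K) * α (π i) ^ n := by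
      exact (Equiv.sum_comp π (fun i => (P (π.symm i)).eval (n : K) * α i ^ n)).symm.trans
        (by refine Finset.sum_congr rfl fun i _ => ?_; rw [Equiv.symm_apply_apply])
    calc ∑ i, (P (π.symm i) - lam i).eval (n : K) * α i ^ n
        = ∑ i, (P (π.symm i)).eval (n : K) * α i ^ n
          - ∑ i, (lam i).eval (n : K) * α i ^ n := by
          rw [← Finset.sum_sub_distrib]
          exact Finset.sum_congr rfl fun i _ => by rw [eval_sub, sub_mul]
      _ = 0 := by rw [hre, hkey n hn, sub_self]
  have hPlam : ∀ i, P i = lam (π i) := by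
    intro i
    have := hDzero (π i)
    rw [Equiv.symm_apply_apply] at this
    exact sub_eq_zero.mp this
  intro i j
  rw [← hPcoeff i j, hPlam i]
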